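/- Let G = (V, E) be a cubic (3-regular) simple graph and let (S, C, H, M_G) be the associated assignment problem with couples. If G admits a proper 3-edge-coloring, then the target matrix M_G is decomposable, i.e., M_G is a convex combination of deterministic assignment matrices. -/

import Mathlib

open Finset


section Helpers

set_option linter.unusedSectionVars false
variable {V : Type*} [Fintype V] [DecidableEq V] (G : SimpleGraph V) [DecidableRel G.Adj]

lemma perm_count2 : ∀ a b : Fin 3, ((univ : Finset (Equiv.Perm (Fin 3))).filter fun σ => σ a = b).card = 2 := by decide
lemma perm_count2' : ∀ a b : Fin 3, ((univ : Finset (Equiv.Perm (Fin 3))).filter fun σ => b = σ a).card = 2 := by decide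
lemma perm_count4 : ∀ a b : Fin 3, ((univ : Finset (Equiv.Perm (Fin 3))).filter fun σ => ¬ σ a = b).card = 4 := by decide

lemma card_mem_edge (e : {e : Sym2 V // e ∈ G.edgeSet}) :
    ((univ : Finset V).filter fun v => v ∈ e.val).card = 2 := by
  obtain ⟨e, he⟩ := e
  induction e using Sym2.ind with
  | _ u v =>
    have hadj : G.Adj u v := he
    have hne : u ≠ v := hadj.ne
    have h2 : ((univ : Finset V).filter fun w => w ∈ (s(u, v) : Sym2 V)) = {u, v} := by
      ext w; simp [Sym2.mem_iff]
    rw [h2, Finset.card_insert_of_notMem (by simp [hne]), Finset.card_singleton]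

lemma card_incident (hreg : G.IsRegularOfDegree 3) (v : V) :
    ((univ : Finset {e : Sym2 V // e ∈ G.edgeSet}).filter fun e => v ∈ e.val).card = 3 := by
  rw [← hreg v, ← G.card_incidenceFinset_eq_degree v]
  apply Finset.card_bij (fun e _ => e.val)
  · rintro ⟨e, he⟩ ha
    simp only [mem_filter, mem_univ, true_and] at ha
    simp [SimpleGraph.incidenceFinset, SimpleGraph.incidenceSet, Set.mem_toFinset, he, ha]
    convert (Set.mem_toFinset (s := {e | e ∈ G.edgeSet ∧ v ∈ e})).mpr ⟨he, ha⟩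
    exact congrArg (fun i => @Set.toFinset _ _ i) (Subsingleton.elim _ _)
  · rintro ⟨e, he⟩ - ⟨e', he'⟩ - h
    simpa using h
  · intro e he
    rw [SimpleGraph.mem_incidenceFinset, SimpleGraph.incidenceSet] at he
    exact ⟨⟨e, he.1⟩, by simpa using he.2, rfl⟩

lemma card_incident_color (hreg : G.IsRegularOfDegree 3) (χ : {e : Sym2 V // e ∈ G.edgeSet} → Fin 3)
    (hprop : ∀ e e', e ≠ e' → (∃ v : V, v ∈ e.val ∧ v ∈ e'.val) → χ e ≠ χ e')
    (v : V) (k : Fin 3) :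
    ((univ : Finset {e : Sym2 V // e ∈ G.edgeSet}).filter
      fun e => v ∈ e.val ∧ χ e = k).card = 1 := by
  classical
  set A := (univ : Finset {e : Sym2 V // e ∈ G.edgeSet}).filter (fun e => v ∈ e.val) with hA
  have hmemA : ∀ e, e ∈ A ↔ v ∈ e.val := by intro e; simp [hA]
  have hinj : Set.InjOn χ A := by
    intro e he e' he' hcc
    by_contra hne
    exact hprop e e' hne ⟨v, (hmemA e).1 he, (hmemA e').1 he'⟩ hcc
  have hcard : A.card = 3 := card_incident G hreg v
  have himg : A.image χ = (univ : Finset (Fin 3)) := by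
    apply Finset.eq_univ_of_card
    rw [Finset.card_image_of_injOn hinj, hcard]; rfl
  have hk : k ∈ A.image χ := by rw [himg]; exact mem_univ k
  rw [Finset.mem_image] at hk
  obtain ⟨e₀, he₀, hke⟩ := hk
  rw [Finset.card_eq_one]
  refine ⟨e₀, ?_⟩
  ext e
  simp only [mem_filter, mem_univ, true_and, Finset.mem_singleton]
  constructor
  · rintro ⟨hv, hc⟩
    exact hinj (by simpa [hmemA] using hv) (by simpa using he₀) (hc.trans hke.symm)
  · rintro rfl
    exact ⟨(hmemA _).1 he₀, hke⟩

end Helpers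


/-- `(S, C, H, M)` (with `I`, `H` types of interns and hospitals) is an assignment problem
with couples: `S` is the set of single interns, `C` the set of couples (ordered pairs of
members), every intern is a single or a member of a couple, members of couples are distinct
from each other, from the singles, and from members of other couples, `M ∈ [0,1]^{I×H}`,
each row of `M` sums to `1`, and both members of a couple have identical rows. -/
def IsCouplesProblem {I H : Type*} [Fintype I] [Fintype H]
    (S : Finset I) (C : Finset (I × I)) (M : I → H → ℝ) : Prop :=
  (∀ i : I, i ∈ S ∨ ∃ c ∈ C, i = c.1 ∨ i = c.2) ∧
  (∀ c ∈ C, c.1 ∉ S ∧ c.2 ∉ S ∧ c.1 ≠ c.2) ∧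
  (∀ c ∈ C, ∀ c' ∈ C, c ≠ c' →
    c.1 ≠ c'.1 ∧ c.1 ≠ c'.2 ∧ c.2 ≠ c'.1 ∧ c.2 ≠ c'.2) ∧
  (∀ (i : I) (h : H), 0 ≤ M i h ∧ M i h ≤ 1) ∧
  (∀ i : I, ∑ h : H, M i h = 1) ∧
  (∀ c ∈ C, ∀ h : H, M c.1 h = M c.2 h)

/-- `M'` is a deterministic assignment matrix with respect to the problem with couples `C`
and target matrix `M`: its entries are in `{0,1}`, rows sum to `1`, both members of each
couple have identical rows, and each column sum equals the capacity `q_h = ∑ i, M i h`. -/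
def IsDeterministicAssignment {I H : Type*} [Fintype I] [Fintype H]
    (C : Finset (I × I)) (M M' : I → H → ℝ) : Prop :=
  (∀ (i : I) (h : H), M' i h = 0 ∨ M' i h = 1) ∧
  (∀ i : I, ∑ h : H, M' i h = 1) ∧
  (∀ c ∈ C, ∀ h : H, M' c.1 h = M' c.2 h) ∧
  (∀ h : H, ∑ i : I, M' i h = ∑ i : I, M i h)

/-- `M` is decomposable: it is a convex combination (with weights in `(0,1)`) of
deterministic assignment matrices. -/
def Decomposable {I H : Type*} [Fintype I] [Fintype H]
    (C : Finset (I × I)) (M : I → H → ℝ) : Prop :=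
  ∃ (K : ℕ) (lam : Fin K → ℝ) (Ms : Fin K → I → H → ℝ),
    (∀ k, 0 < lam k ∧ lam k < 1) ∧ (∑ k, lam k = 1) ∧
    (∀ k, IsDeterministicAssignment C M (Ms k)) ∧
    (∀ (i : I) (h : H), M i h = ∑ k, lam k * Ms k i h)


section CubicGraph

variable {V : Type*} [Fintype V] [DecidableEq V] (G : SimpleGraph V) [DecidableRel G.Adj]

/-- The edges of `G`, as a type. -/
abbrev GEdge := {e : Sym2 V // e ∈ G.edgeSet}

/-- The interns of the assignment problem associated to `G`: for each edge `e` there is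
one couple (two members, indexed by `Bool`) and six singles, indexed by a color
`i ∈ {1,2,3}` together with an endpoint `w` of `e`. -/
abbrev GIntern :=
  (GEdge G × Bool) ⊕ {p : GEdge G × Fin 3 × V // p.2.2 ∈ (p.1 : Sym2 V)}

/-- The hospitals of the assignment problem associated to `G`: for each edge `e` the three
hospitals `A(e), B(e), C(e)` (indexed by `GEdge G × Fin 3`), and for each vertex `v` and
color `i` the hospital `(v, i)`. -/
abbrev GHospital := (GEdge G × Fin 3) ⊕ (V × Fin 3)

/-- The target matrix associated to `G`: the couple of edge `e` has probability `1/3` at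
each of `A(e), B(e), C(e)`; the single of edge `e`, color `i` and endpoint `w` has
probability `2/3` at the `i`-th hospital of `e` and probability `1/3` at hospital
`(w, i)`. -/
noncomputable def GM : GIntern G → GHospital G → ℝ
  | Sum.inl (e, _), Sum.inl (e', _) => if e' = e then 1 / 3 else 0
  | Sum.inl _, Sum.inr _ => 0
  | Sum.inr p, Sum.inl (e', i') => if e' = p.1.1 ∧ i' = p.1.2.1 then 2 / 3 else 0
  | Sum.inr p, Sum.inr (v, i') => if v = p.1.2.2 ∧ i' = p.1.2.1 then 1 / 3 else 0

/-- The set of single interns of the problem associated to `G`. -/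
def GS : Finset (GIntern G) := Finset.univ.filter fun i => i.isRight

instance : DecidableEq (GIntern G × GIntern G) := instDecidableEqProd

/-- The set of couples of the problem associated to `G`: one couple per edge. -/
def GC : Finset (GIntern G × GIntern G) :=
  Finset.univ.image fun e : GEdge G => (Sum.inl (e, false), Sum.inl (e, true))


-- ===================== auxiliary decomposition machinery =====================

section Aux

set_option linter.unusedSectionVars false

lemma ite_and_right {p q r : Prop} [Decidable p] [Decidable q] [Decidable r] (x : ℝ) :
    (if p ∧ q ∧ r then x else 0) = if p ∧ q then (if r then x else 0) else 0 := by
  split_ifs <;> simp_all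

lemma collapse3 {α β γ : Type*} [Fintype α] [Fintype β] [Fintype γ] [DecidableEq α]
    [DecidableEq β] (e : α) (k : β) (c : α → β → ℝ) (P : α → γ → Prop)
    [∀ a g, Decidable (P a g)] :
    ∑ q : α × β × γ, (if P q.1 q.2.2 then (if e = q.1 ∧ k = q.2.1 then c q.1 q.2.1 else 0) else 0)
      = ∑ w : γ, if P e w then c e k else 0 := by
  have key : ∀ q : α × β × γ,
      (if P q.1 q.2.2 then (if e = q.1 ∧ k = q.2.1 then c q.1 q.2.1 else 0) else 0)
      = (if e = q.1 then (if k = q.2.1 then (if P q.1 q.2.2 then c q.1 q.2.1 else 0) else 0)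
          else 0) := by
    rintro ⟨a, i, w⟩
    split_ifs <;> tauto
  simp_rw [key, Fintype.sum_prod_type, Finset.sum_ite_irrel, Finset.sum_const_zero,
    Finset.sum_ite_eq, mem_univ, if_true]

lemma collapse3v {α β γ : Type*} [Fintype α] [Fintype β] [Fintype γ] [DecidableEq γ]
    [DecidableEq β] (v : γ) (k : β) (c : α → β → ℝ) (P : α → γ → Prop)
    [∀ a g, Decidable (P a g)] :
    ∑ q : α × β × γ, (if P q.1 q.2.2 then (if v = q.2.2 ∧ k = q.2.1 then c q.1 q.2.1 else 0) else 0)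
      = ∑ a : α, if P a v then c a k else 0 := by
  have key : ∀ q : α × β × γ,
      (if P q.1 q.2.2 then (if v = q.2.2 ∧ k = q.2.1 then c q.1 q.2.1 else 0) else 0)
      = (if k = q.2.1 then (if v = q.2.2 then (if P q.1 q.2.2 then c q.1 q.2.1 else 0) else 0)
          else 0) := by
    rintro ⟨a, i, w⟩
    split_ifs <;> tauto
  simp_rw [key, Fintype.sum_prod_type, Finset.sum_ite_irrel, Finset.sum_const_zero,
    Finset.sum_ite_eq, mem_univ, if_true]

variable {V : Type*} [Fintype V] [DecidableEq V] (G : SimpleGraph V) [DecidableRel G.Adj]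

/-- The deterministic assignment associated to a coloring χ and a permutation σ. -/
def GMs (χ : GEdge G → Fin 3) (σ : Equiv.Perm (Fin 3)) : GIntern G → GHospital G → ℝ
  | Sum.inl (e, _), Sum.inl (e', k) => if e' = e ∧ k = σ (χ e) then 1 else 0
  | Sum.inl _, Sum.inr _ => 0
  | Sum.inr p, Sum.inl (e', k) =>
      if e' = p.1.1 ∧ k = p.1.2.1 ∧ ¬ σ (χ p.1.1) = p.1.2.1 then 1 else 0
  | Sum.inr p, Sum.inr (w, k) =>
      if w = p.1.2.2 ∧ k = p.1.2.1 ∧ σ (χ p.1.1) = p.1.2.1 then 1 else 0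

lemma sum_singles (f : GEdge G × Fin 3 × V → ℝ) :
    ∑ p : {p : GEdge G × Fin 3 × V // p.2.2 ∈ (p.1 : Sym2 V)}, f p.val
      = ∑ q : GEdge G × Fin 3 × V, if q.2.2 ∈ (q.1 : Sym2 V) then f q else 0 := by
  rw [← Finset.sum_subtype
    ((univ : Finset (GEdge G × Fin 3 × V)).filter fun q => q.2.2 ∈ (q.1 : Sym2 V))
    (by simp) f, Finset.sum_filter]

lemma sum_mem_edge_const (e : GEdge G) (c : ℝ) :
    ∑ w : V, (if w ∈ (e : Sym2 V) then c else 0) = 2 * c := by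
  rw [← Finset.sum_filter, Finset.sum_const, card_mem_edge G e, nsmul_eq_mul]
  norm_num

/-- Column sum of GM at an edge-hospital. -/
lemma GM_col_edge (e : GEdge G) (k : Fin 3) :
    ∑ i : GIntern G, GM G i (Sum.inl (e, k)) = 2 := by
  rw [Fintype.sum_sum_type]
  have h1 : ∑ x : GEdge G × Bool, GM G (Sum.inl x) (Sum.inl (e, k)) = 2 / 3 := by
    simp only [GM, Fintype.sum_prod_type, Fintype.sum_bool]
    rw [Finset.sum_add_distrib]
    simp [Finset.sum_ite_eq]
    norm_num
  have h2 : ∑ p : {p : GEdge G × Fin 3 × V // p.2.2 ∈ (p.1 : Sym2 V)},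
      GM G (Sum.inr p) (Sum.inl (e, k)) = 4 / 3 := by
    have e1 : ∑ p : {p : GEdge G × Fin 3 × V // p.2.2 ∈ (p.1 : Sym2 V)},
        GM G (Sum.inr p) (Sum.inl (e, k))
        = ∑ q : GEdge G × Fin 3 × V, if q.2.2 ∈ (q.1 : Sym2 V) then
            (if e = q.1 ∧ k = q.2.1 then (2:ℝ)/3 else 0) else 0 :=
      sum_singles G (fun q => if e = q.1 ∧ k = q.2.1 then (2:ℝ)/3 else 0)
    rw [e1, collapse3 e k (fun _ _ => (2:ℝ)/3) (fun (a : GEdge G) (w : V) => w ∈ (a : Sym2 V)), sum_mem_edge_const]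
    norm_num
  rw [h1, h2]; norm_num

/-- Column sum of GM at a vertex-hospital. -/
lemma GM_col_vertex (hreg : G.IsRegularOfDegree 3) (v : V) (k : Fin 3) :
    ∑ i : GIntern G, GM G i (Sum.inr (v, k)) = 1 := by
  rw [Fintype.sum_sum_type]
  have h1 : ∑ x : GEdge G × Bool, GM G (Sum.inl x) (Sum.inr (v, k)) = 0 := by
    simp [GM]
  have h2 : ∑ p : {p : GEdge G × Fin 3 × V // p.2.2 ∈ (p.1 : Sym2 V)},
      GM G (Sum.inr p) (Sum.inr (v, k)) = 1 := by
    have e1 : ∑ p : {p : GEdge G × Fin 3 × V // p.2.2 ∈ (p.1 : Sym2 V)},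
        GM G (Sum.inr p) (Sum.inr (v, k))
        = ∑ q : GEdge G × Fin 3 × V, if q.2.2 ∈ (q.1 : Sym2 V) then
            (if v = q.2.2 ∧ k = q.2.1 then (1:ℝ)/3 else 0) else 0 :=
      sum_singles G (fun q => if v = q.2.2 ∧ k = q.2.1 then (1:ℝ)/3 else 0)
    rw [e1, collapse3v v k (fun _ _ => (1:ℝ)/3) (fun (a : GEdge G) (w : V) => w ∈ (a : Sym2 V)), ← Finset.sum_filter, Finset.sum_const,
      card_incident G hreg v, nsmul_eq_mul]
    norm_num
  rw [h1, h2]; norm_num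

/-- Column sum of GMs at an edge-hospital. -/
lemma GMs_col_edge (χ : GEdge G → Fin 3) (σ : Equiv.Perm (Fin 3)) (e : GEdge G) (k : Fin 3) :
    ∑ i : GIntern G, GMs G χ σ i (Sum.inl (e, k)) = 2 := by
  rw [Fintype.sum_sum_type]
  have h1 : ∑ x : GEdge G × Bool, GMs G χ σ (Sum.inl x) (Sum.inl (e, k))
      = 2 * (if k = σ (χ e) then 1 else 0) := by
    simp only [GMs, Fintype.sum_prod_type, Fintype.sum_bool, ite_and]
    rw [Finset.sum_add_distrib]
    simp only [Finset.sum_ite_eq, mem_univ, if_true]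
    split_ifs <;> norm_num
  have h2 : ∑ p : {p : GEdge G × Fin 3 × V // p.2.2 ∈ (p.1 : Sym2 V)},
      GMs G χ σ (Sum.inr p) (Sum.inl (e, k))
      = 2 * (if ¬ σ (χ e) = k then 1 else 0) := by
    have e1 : ∑ p : {p : GEdge G × Fin 3 × V // p.2.2 ∈ (p.1 : Sym2 V)},
        GMs G χ σ (Sum.inr p) (Sum.inl (e, k))
        = ∑ q : GEdge G × Fin 3 × V, if q.2.2 ∈ (q.1 : Sym2 V) then
            (if e = q.1 ∧ k = q.2.1 ∧ ¬ σ (χ q.1) = q.2.1 then (1:ℝ) else 0) else 0 :=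
      sum_singles G (fun q => if e = q.1 ∧ k = q.2.1 ∧ ¬ σ (χ q.1) = q.2.1 then (1:ℝ) else 0)
    rw [e1]
    simp_rw [ite_and_right]
    rw [collapse3 e k (fun a i => if ¬ σ (χ a) = i then (1:ℝ) else 0) (fun (a : GEdge G) (w : V) => w ∈ (a : Sym2 V)), sum_mem_edge_const]
  rw [h1, h2]
  by_cases hk : σ (χ e) = k
  · rw [if_pos hk.symm, if_neg (not_not_intro hk)]
    norm_num
  · rw [if_neg (fun h => hk h.symm), if_pos hk]
    norm_num

/-- Column sum of GMs at a vertex-hospital. -/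
lemma GMs_col_vertex (hreg : G.IsRegularOfDegree 3) (χ : GEdge G → Fin 3)
    (hprop : ∀ e e', e ≠ e' → (∃ v : V, v ∈ e.val ∧ v ∈ e'.val) → χ e ≠ χ e')
    (σ : Equiv.Perm (Fin 3)) (v : V) (k : Fin 3) :
    ∑ i : GIntern G, GMs G χ σ i (Sum.inr (v, k)) = 1 := by
  rw [Fintype.sum_sum_type]
  have h1 : ∑ x : GEdge G × Bool, GMs G χ σ (Sum.inl x) (Sum.inr (v, k)) = 0 := by
    simp [GMs]
  have h2 : ∑ p : {p : GEdge G × Fin 3 × V // p.2.2 ∈ (p.1 : Sym2 V)},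
      GMs G χ σ (Sum.inr p) (Sum.inr (v, k)) = 1 := by
    have e1 : ∑ p : {p : GEdge G × Fin 3 × V // p.2.2 ∈ (p.1 : Sym2 V)},
        GMs G χ σ (Sum.inr p) (Sum.inr (v, k))
        = ∑ q : GEdge G × Fin 3 × V, if q.2.2 ∈ (q.1 : Sym2 V) then
            (if v = q.2.2 ∧ k = q.2.1 ∧ σ (χ q.1) = q.2.1 then (1:ℝ) else 0) else 0 :=
      sum_singles G (fun q => if v = q.2.2 ∧ k = q.2.1 ∧ σ (χ q.1) = q.2.1 then (1:ℝ) else 0)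
    rw [e1]
    simp_rw [ite_and_right]
    rw [collapse3v v k (fun a i => if σ (χ a) = i then (1:ℝ) else 0) (fun (a : GEdge G) (w : V) => w ∈ (a : Sym2 V))]
    have hprop' : ∀ e e', e ≠ e' → (∃ w : V, w ∈ e.val ∧ w ∈ e'.val) →
        σ (χ e) ≠ σ (χ e') := fun e e' hne hsh hcc =>
      hprop e e' hne hsh (σ.injective hcc)
    have := card_incident_color G hreg (fun e => σ (χ e)) hprop' v k
    simp_rw [← ite_and]
    rw [Finset.sum_boole, this]
    norm_num
  rw [h1, h2]; norm_num

/-- Row sums of GMs are 1. -/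
lemma GMs_row (χ : GEdge G → Fin 3) (σ : Equiv.Perm (Fin 3)) (i : GIntern G) :
    ∑ h : GHospital G, GMs G χ σ i h = 1 := by
  rcases i with ⟨e, b⟩ | p
  · rw [Fintype.sum_sum_type]
    simp [GMs, Fintype.sum_prod_type, ite_and, Finset.sum_ite_eq']
  · rw [Fintype.sum_sum_type]
    by_cases hC : σ (χ p.1.1) = p.1.2.1 <;>
      simp [GMs, Fintype.sum_prod_type, ite_and, Finset.sum_ite_eq', hC]

/-- Sum over all permutations gives 6 times the target. -/
lemma sum_perms (χ : GEdge G → Fin 3) (i : GIntern G) (h : GHospital G) :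
    ∑ σ : Equiv.Perm (Fin 3), GMs G χ σ i h = 6 * GM G i h := by
  rcases i with ⟨e, b⟩ | p <;> rcases h with ⟨e', k⟩ | ⟨w, k⟩
  · simp only [GMs, GM]
    by_cases he : e' = e
    · subst he
      simp only [true_and, eq_self_iff_true, if_true]
      rw [Finset.sum_boole, perm_count2']
      norm_num
    · simp [he]
  · simp [GMs, GM]
  · simp only [GMs, GM]
    by_cases hc : e' = p.1.1 ∧ k = p.1.2.1
    · obtain ⟨h1, h2⟩ := hc
      subst h1; subst h2
      simp only [eq_self_iff_true, true_and, if_true]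
      rw [Finset.sum_boole, perm_count4]
      norm_num
    · rw [Finset.sum_eq_zero fun σ _ => if_neg (fun hcon => hc ⟨hcon.1, hcon.2.1⟩),
        if_neg hc]
      norm_num
  · simp only [GMs, GM]
    by_cases hc : w = p.1.2.2 ∧ k = p.1.2.1
    · obtain ⟨h1, h2⟩ := hc
      subst h1; subst h2
      simp only [eq_self_iff_true, true_and, if_true]
      rw [Finset.sum_boole, perm_count2]
      norm_num
    · rw [Finset.sum_eq_zero fun σ _ => if_neg (fun hcon => hc ⟨hcon.1, hcon.2.1⟩),
        if_neg hc]
      norm_num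

/-- Each GMs is a deterministic assignment. -/
lemma GMs_det (hreg : G.IsRegularOfDegree 3) (χ : GEdge G → Fin 3)
    (hprop : ∀ e e', e ≠ e' → (∃ v : V, v ∈ e.val ∧ v ∈ e'.val) → χ e ≠ χ e')
    (σ : Equiv.Perm (Fin 3)) :
    IsDeterministicAssignment (GC G) (GM G) (GMs G χ σ) := by
  refine ⟨?_, GMs_row G χ σ, ?_, ?_⟩
  · intro i h
    rcases i with ⟨e, b⟩ | p <;> rcases h with ⟨e', k⟩ | ⟨w, k⟩ <;>
      simp only [GMs] <;> first | (split_ifs <;> simp) | simp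
  · intro c hc h
    simp only [GC, Finset.mem_image, Finset.mem_univ, true_and] at hc
    obtain ⟨e, rfl⟩ := hc
    rcases h with ⟨e', k⟩ | ⟨w, k⟩ <;> rfl
  · intro h
    rcases h with ⟨e', k⟩ | ⟨w, k⟩
    · rw [GMs_col_edge, GM_col_edge]
    · rw [GMs_col_vertex G hreg χ hprop, GM_col_vertex G hreg]

end Aux

/-- if a cubic simple graph `G` admits a proper 3-edge-coloring, then
the target matrix of the associated assignment problem with couples is decomposable. -/
theorem cubic_colorable_decomposable (hreg : G.IsRegularOfDegree 3)
    (hcol : ∃ χ : GEdge G → Fin 3, ∀ e e' : GEdge G, e ≠ e' →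
      (∃ v : V, v ∈ (e : Sym2 V) ∧ v ∈ (e' : Sym2 V)) → χ e ≠ χ e') :
    Decomposable (GC G) (GM G) := by
  obtain ⟨χ, hχ⟩ := hcol
  have hcard : Fintype.card (Equiv.Perm (Fin 3)) = 6 := by
    rw [Fintype.card_perm, Fintype.card_fin]; decide
  let ε : Equiv.Perm (Fin 3) ≃ Fin 6 := Fintype.equivFinOfCardEq hcard
  refine ⟨6, fun _ => 1/6, fun j => GMs G χ (ε.symm j), fun j => by norm_num, ?_, ?_, ?_⟩
  · rw [Finset.sum_const, Finset.card_univ, Fintype.card_fin, nsmul_eq_mul]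
    norm_num
  · intro j
    exact GMs_det G hreg χ hχ (ε.symm j)
  · intro i h
    have key := sum_perms G χ i h
    have e1 : ∑ j : Fin 6, (1:ℝ)/6 * GMs G χ (ε.symm j) i h
        = ∑ σ : Equiv.Perm (Fin 3), (1:ℝ)/6 * GMs G χ σ i h :=
      Equiv.sum_comp ε.symm (fun σ => (1:ℝ)/6 * GMs G χ σ i h)
    rw [e1, ← Finset.mul_sum, key]
    ring

end CubicGraph
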